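/- Let F be a field of characteristic 2 and L/F an extension of degree 4 with a² ∈ F for all a ∈ L. Let (1, i, j, k) with k = ij be a basis of L over F, and in L ⊗_F L set p = 1⊗i + i⊗1, q = 1⊗j + j⊗1, r = pq. Then r = 1⊗k + i⊗j + j⊗i + k⊗1, and (1⊗1, p, q, r) is an L-basis of L ⊗_F L. -/

import Mathlib

open TensorProduct

lemma indep4 (F L : Type*) [Field F] [Field L] [Algebra F L]
    (hsq : ∀ a : L, ∃ f : F, algebraMap F L f = a ^ 2) (i j : L)
    (hij : LinearIndependent F ![1, i, j]) :
    LinearIndependent F ![1, i, j, i*j] := by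
  have hinj := (algebraMap F L).injective
  rw [Fintype.linearIndependent_iff]
  intro g hg
  rw [Fin.sum_univ_four] at hg
  simp only [Matrix.cons_val_zero, Matrix.cons_val_one, Matrix.head_cons,
    Matrix.cons_val_two, Matrix.tail_cons, Matrix.cons_val_three] at hg
  by_cases h3 : g 3 = 0
  · have hg' : g 0 • (1:L) + g 1 • i + g 2 • j = 0 := by
      rw [h3, zero_smul, add_zero] at hg; exact hg
    have := Fintype.linearIndependent_iff.mp hij ![g 0, g 1, g 2] (by
      rw [Fin.sum_univ_three]; simpa using hg')
    intro k
    fin_cases k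
    · exact this 0
    · exact this 1
    · exact this 2
    · exact h3
  · exfalso
    set A := algebraMap F L with hA
    set a := g 0 / g 3
    set b := g 1 / g 3
    set c := g 2 / g 3
    have heq : A a + A b * i + A c * j + i * j = 0 := by
      have h3' : A (g 3) ≠ 0 := fun h => h3 (hinj (by simpa using h))
      simp only [Algebra.smul_def] at hg
      field_simp [a, b, c, map_div₀]
      have e : A (g 3) * (A a + A b * i + A c * j + i * j)
          = A (g 0) * 1 + A (g 1) * i + A (g 2) * j + A (g 3) * (i*j) := by
        simp only [a, b, c, map_div₀]
        field_simp
      exact (mul_eq_zero.mp (e.trans hg)).resolve_left h3'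
    set u := i + A c with hu_def
    set v := j + A b with hv_def
    have hu : u ≠ 0 := by
      intro h
      have := Fintype.linearIndependent_iff.mp hij ![c, 1, 0] (by
        rw [Fin.sum_univ_three]
        simpa [Algebra.smul_def, add_comm] using h)
      simpa using this 1
    have hv : v ≠ 0 := by
      intro h
      have := Fintype.linearIndependent_iff.mp hij ![b, 0, 1] (by
        rw [Fin.sum_univ_three]
        simpa [Algebra.smul_def, add_comm] using h)
      simpa using this 2
    set w := c * b - a with hw_def
    have huv : u * v = A w := by
      rw [hu_def, hv_def, hw_def]
      rw [map_sub, map_mul]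
      linear_combination heq
    obtain ⟨s, hs⟩ := hsq u
    have hs0 : A s ≠ 0 := by rw [hs]; exact pow_ne_zero 2 hu
    have hveq : v = A (w / s) * u := by
      have h1 : v * A s = A w * u := by
        rw [hs, ← huv]; ring
      rw [map_div₀]
      field_simp
      linear_combination h1
    have := Fintype.linearIndependent_iff.mp hij ![w/s * c - b, w/s, -1] (by
      rw [Fin.sum_univ_three]
      simp only [Matrix.cons_val_zero, Matrix.cons_val_one, Matrix.head_cons,
        Matrix.cons_val_two, Matrix.tail_cons, Algebra.smul_def, map_sub, map_mul, map_neg, map_one]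
      rw [hv_def, hu_def] at hveq
      linear_combination -hveq)
    simpa using this 2

theorem stmt8 (F L : Type*) [Field F] [Field L] [Algebra F L] [CharP F 2]
    (hdim : Module.finrank F L = 4)
    (hsq : ∀ a : L, ∃ f : F, algebraMap F L f = a ^ 2) (i j : L) (hij : LinearIndependent F ![1, i, j])
    (p q r : L ⊗[F] L)
    (hp : p = 1 ⊗ₜ[F] i + i ⊗ₜ[F] 1) (hq : q = 1 ⊗ₜ[F] j + j ⊗ₜ[F] 1)
    (hr : r = p * q) :
    r = 1 ⊗ₜ[F] (i * j) + i ⊗ₜ[F] j + j ⊗ₜ[F] i + (i * j) ⊗ₜ[F] 1 ∧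
    LinearIndependent L ![(1 : L ⊗[F] L), p, q, r] ∧
    Submodule.span L {(1 : L ⊗[F] L), p, q, r} = ⊤ := by
  have hindep : LinearIndependent F ![1, i, j, i*j] := indep4 F L hsq i j hij
  have hr' : r = 1 ⊗ₜ[F] (i * j) + i ⊗ₜ[F] j + j ⊗ₜ[F] i + (i * j) ⊗ₜ[F] 1 := by
    rw [hr, hp, hq]
    simp only [add_mul, mul_add, Algebra.TensorProduct.tmul_mul_tmul, one_mul, mul_one]
    ring
  refine ⟨hr', ?_⟩
  set B : Module.Basis (Fin 4) F L :=
    basisOfLinearIndependentOfCardEqFinrank hindep (by simp [hdim]) with hBdef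
  have hB : ⇑B = ![1, i, j, i*j] := coe_basisOfLinearIndependentOfCardEqFinrank _ _
  let e : Module.Basis (Fin 4) L (L ⊗[F] L) := B.baseChange L
  have hrep : ∀ k : Fin 4, B.repr (![1, i, j, i*j] k) = Finsupp.single k 1 := by
    intro k
    rw [← hB]
    exact B.repr_self k
  have h1 := hrep 0
  have hi := hrep 1
  have hj := hrep 2
  have hk := hrep 3
  simp only [Matrix.cons_val_zero, Matrix.cons_val_one, Matrix.head_cons,
    Matrix.cons_val_two, Matrix.tail_cons, Matrix.cons_val_three] at h1 hi hj hk
  have hM : e.toMatrix ![1, p, q, r] =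
      !![1, i, j, i*j; 0, 1, 0, j; 0, 0, 1, i; 0, 0, 0, 1] := by
    ext m k
    rw [Module.Basis.toMatrix_apply]
    fin_cases k <;>
      simp [e, hp, hq, hr', Algebra.TensorProduct.one_def, Module.Basis.baseChange_repr_tmul,
        h1, hi, hj, hk, Finsupp.single_apply] <;>
      fin_cases m <;> simp [Matrix.vecHead, Matrix.vecTail]
  have hdet : IsUnit (e.det ![1, p, q, r]) := by
    rw [Module.Basis.det_apply, hM]
    simp [Matrix.det_succ_row_zero, Fin.sum_univ_succ]
  have := (Module.Basis.is_basis_iff_det e).mpr hdet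
  refine ⟨this.1, ?_⟩
  have hrange : Set.range ![(1 : L ⊗[F] L), p, q, r] = {1, p, q, r} := by
    ext x
    simp [Matrix.range_cons, Matrix.range_empty]
    tauto
  rw [← hrange]
  exact this.2
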